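/- The free one-generated algebra in the variety of cancellative hoops is isomorphic to C_ω; consequently any nontrivial totally ordered cancellative hoop generates the same quasivariety as C_ω. -/

import Mathlib

/-- A hoop: a commutative (integral, residuated) monoid with a residuum `→`,
axiomatized equationally by `x→x = 1`, divisibility `x·(x→y) = y·(y→x)` and
`(x·y)→z = x→(y→z)`.  The order is `a ≤ b ↔ a→b = 1`. -/
class Hoop (A : Type*) extends CommMonoid A where
  himp : A → A → A
  himp_self : ∀ a : A, himp a a = 1
  div_eq : ∀ a b : A, a * himp a b = b * himp b a
  himp_mul : ∀ a b c : A, himp (a * b) c = himp a (himp b c)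

/-- A Wajsberg hoop: a hoop satisfying Tanaka's equation. -/
class WajsbergHoop (A : Type*) extends Hoop A where
  tanaka : ∀ a b : A, himp (himp a b) b = himp (himp b a) a

/-- Terms in the language `{·, →, 1}` over countably many variables. -/
inductive HTerm
  | var : ℕ → HTerm
  | one : HTerm
  | mul : HTerm → HTerm → HTerm
  | imp : HTerm → HTerm → HTerm

/-- Evaluation of a term in a hoop under an assignment. -/
def heval {A : Type*} [Hoop A] (v : ℕ → A) : HTerm → A
  | .var n => v n
  | .one => 1
  | .mul s t => heval v s * heval v t
  | .imp s t => Hoop.himp (heval v s) (heval v t)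

/-- Evaluation of a term in `C_ω`, the negative cone of `ℤ` presented as
exponents: `⟨ℕ, +, truncated subtraction, 0⟩`, `a^i → a^j = a^{max(j-i,0)}`. -/
def ceval (v : ℕ → ℕ) : HTerm → ℕ
  | .var n => v n
  | .one => 0
  | .mul s t => ceval v s + ceval v t
  | .imp s t => ceval v t - ceval v s

namespace HoopAux

open Hoop

variable {A : Type} [Hoop A]

local infixr:60 " ⇨ " => Hoop.himp

lemma one_himp_himp (a b : A) : (1:A) ⇨ (a ⇨ b) = a ⇨ b := by
  rw [← himp_mul, one_mul]

lemma himp_one_himp (a : A) : a ⇨ ((1:A) ⇨ a) = 1 := by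
  have := himp_mul a 1 a
  rw [mul_one] at this
  rw [← this, Hoop.himp_self]

section Cancel
variable (hc : ∀ a b c : A, a * c = b * c → a = b)
include hc

lemma cancel_left {a b c : A} (h : c * a = c * b) : a = b := by
  apply hc a b c; rwa [mul_comm a c, mul_comm b c]

lemma one_himp_himp_one (a : A) : ((1:A) ⇨ a) ⇨ 1 = 1 := by
  have h := div_eq ((1:A) ⇨ a) 1
  rw [one_mul] at h
  have h2 : (1:A) ⇨ ((1:A) ⇨ a) = (1:A) ⇨ a := one_himp_himp 1 a
  rw [h2] at h
  -- h : (1 ⇨ a) * ((1 ⇨ a) ⇨ 1) = 1 ⇨ a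
  have := cancel_left (a := ((1:A) ⇨ a) ⇨ 1) (b := 1) (c := (1:A) ⇨ a) hc ?_
  · exact this
  · rw [h, mul_one]

lemma himp_one (a : A) : a ⇨ (1:A) = 1 := by
  have key : ∀ x : A, (x ⇨ (1:A)) ⇨ 1 = 1 := by
    intro x
    have : (1:A) ⇨ (x ⇨ 1) = x ⇨ 1 := one_himp_himp x 1
    calc (x ⇨ (1:A)) ⇨ 1 = ((1:A) ⇨ (x ⇨ 1)) ⇨ 1 := by rw [this]
    _ = 1 := one_himp_himp_one hc _
  have h := div_eq a (1:A)
  rw [one_mul] at h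
  -- h : a * (a ⇨ 1) = 1 ⇨ a
  have h2 : (a * (a ⇨ (1:A))) ⇨ 1 = ((1:A) ⇨ a) ⇨ 1 := by rw [h]
  rw [himp_mul, key, one_himp_himp_one hc] at h2
  exact h2

lemma one_himp (a : A) : (1:A) ⇨ a = a := by
  have h := div_eq (1:A) a
  rw [one_mul, himp_one hc, mul_one] at h
  exact h

lemma himp_mul_self (a b : A) : a ⇨ (a * b) = b := by
  have h := div_eq a (a * b)
  have h2 : (a * b) ⇨ a = 1 := by
    rw [mul_comm, himp_mul, Hoop.himp_self, himp_one hc]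
  rw [h2, mul_one] at h
  exact cancel_left hc h

lemma himp_eq_one_iff_dvd (a b : A) : a ⇨ b = 1 ↔ b ∣ a := by
  constructor
  · intro h
    refine ⟨b ⇨ a, ?_⟩
    have := div_eq a b
    rw [h, mul_one] at this
    exact this
  · rintro ⟨c, rfl⟩
    rw [mul_comm, himp_mul, Hoop.himp_self, himp_one hc]

lemma himp_pow (a : A) (l m : ℕ) : (a ^ l) ⇨ (a ^ m) = a ^ (m - l) := by
  rcases le_total l m with h | h
  · have : a ^ m = a ^ l * a ^ (m - l) := by rw [← pow_add, Nat.add_sub_cancel' h]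
    rw [this, himp_mul_self hc]
  · have h0 : m - l = 0 := Nat.sub_eq_zero_of_le h
    have : a ^ l = a ^ (l - m) * a ^ m := by
      rw [← pow_add, Nat.sub_add_cancel h]
    rw [h0, pow_zero, this, himp_mul, Hoop.himp_self, himp_one hc]

lemma eq_one_of_mul_eq_one {a b : A} (h : a * b = 1) : a = 1 := by
  have h1 : a ⇨ (a * b) = b := himp_mul_self hc a b
  rw [h, himp_one hc] at h1
  rw [← h1, mul_one] at h
  exact h

lemma pow_right_injective {a : A} (ha : a ≠ 1) : Function.Injective (a ^ · : ℕ → A) := by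
  have key : ∀ n m : ℕ, n ≤ m → a ^ n = a ^ m → n = m := by
    intro n m hle h
    by_contra hne
    have hlt : n < m := lt_of_le_of_ne hle hne
    have : a ^ n * a ^ (m - n) = a ^ n * 1 := by
      rw [mul_one, ← pow_add, Nat.add_sub_cancel' hle, h]
    have h2 : a ^ (m - n) = 1 := cancel_left hc this
    obtain ⟨k, hk⟩ : ∃ k, m - n = k + 1 := ⟨m - n - 1, by omega⟩
    rw [hk, pow_succ, mul_comm] at h2
    exact ha (eq_one_of_mul_eq_one hc h2)
  intro n m h
  rcases le_total n m with hle | hle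
  · exact key n m hle h
  · exact (key m n hle h.symm).symm

end Cancel

def frel (p q : A × A) : Prop := p.1 * q.2 = q.1 * p.2

def GG (A : Type) [Hoop A] := Quot (frel (A := A))

def gmk (p : A × A) : GG A := Quot.mk _ p

section WithCancel
variable (hc : ∀ a b c : A, a * c = b * c → a = b)

include hc in
lemma frel_trans {p q r : A × A} (h1 : frel p q) (h2 : frel q r) : frel p r := by
  unfold frel at *
  apply hc _ _ q.2
  calc p.1 * r.2 * q.2 = p.1 * q.2 * r.2 := by ac_rfl
    _ = q.1 * p.2 * r.2 := by rw [h1]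
    _ = q.1 * r.2 * p.2 := by ac_rfl
    _ = r.1 * q.2 * p.2 := by rw [h2]
    _ = r.1 * p.2 * q.2 := by ac_rfl

include hc in
lemma gg_exact {p q : A × A} (h : gmk p = gmk q) : frel p q := by
  have h2 := Quot.eqvGen_exact h
  clear h
  induction h2 with
  | rel x y hxy => exact hxy
  | refl x => exact rfl
  | symm x y _ ih => exact ih.symm
  | trans x y z _ _ ih1 ih2 => exact frel_trans hc ih1 ih2

end WithCancel

def gadd : GG A → GG A → GG A :=
  Quot.lift
    (fun p => Quot.lift (fun q => gmk (p.1 * q.1, p.2 * q.2))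
      (fun q q' (h : frel q q') => Quot.sound (show frel _ _ by
        show p.1 * q.1 * (p.2 * q'.2) = p.1 * q'.1 * (p.2 * q.2)
        calc p.1 * q.1 * (p.2 * q'.2) = (q.1 * q'.2) * (p.1 * p.2) := by ac_rfl
          _ = (q'.1 * q.2) * (p.1 * p.2) := by rw [h]
          _ = p.1 * q'.1 * (p.2 * q.2) := by ac_rfl)))
    (fun p p' (h : frel p p') => by
      apply funext; intro x
      induction x using Quot.ind with
      | _ q =>
        apply Quot.sound
        show p.1 * q.1 * (p'.2 * q.2) = p'.1 * q.1 * (p.2 * q.2)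
        calc p.1 * q.1 * (p'.2 * q.2) = (p.1 * p'.2) * (q.1 * q.2) := by ac_rfl
          _ = (p'.1 * p.2) * (q.1 * q.2) := by rw [h]
          _ = p'.1 * q.1 * (p.2 * q.2) := by ac_rfl)

def gneg : GG A → GG A :=
  Quot.lift (fun p => gmk (p.2, p.1))
    (fun p p' (h : frel p p') => Quot.sound (show frel _ _ by
      show p.2 * p'.1 = p'.2 * p.1
      calc p.2 * p'.1 = p'.1 * p.2 := mul_comm _ _
        _ = p.1 * p'.2 := h.symm
        _ = p'.2 * p.1 := mul_comm _ _))

@[simp] lemma gadd_mk (p q : A × A) : gadd (gmk p) (gmk q) = gmk (p.1 * q.1, p.2 * q.2) := rfl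
@[simp] lemma gneg_mk (p : A × A) : gneg (gmk p) = gmk (p.2, p.1) := rfl

lemma gmk_congr {p q : A × A} (h : frel p q) : gmk p = gmk q := Quot.sound h

instance : Add (GG A) := ⟨gadd⟩
instance : Zero (GG A) := ⟨gmk (1, 1)⟩
instance : Neg (GG A) := ⟨gneg⟩

@[simp] lemma add_def (a b : GG A) : a + b = gadd a b := rfl
@[simp] lemma zero_def : (0 : GG A) = gmk (1, 1) := rfl
@[simp] lemma neg_def (a : GG A) : -a = gneg a := rfl

instance gaddgroup : AddCommGroup (GG A) where
  add_assoc := by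
    intro a b c
    induction a using Quot.ind with | _ p =>
    induction b using Quot.ind with | _ q =>
    induction c using Quot.ind with | _ r =>
    show gmk _ = gmk _
    apply gmk_congr
    show (p.1 * q.1) * r.1 * (p.2 * (q.2 * r.2)) = p.1 * (q.1 * r.1) * ((p.2 * q.2) * r.2)
    ac_rfl
  add_comm := by
    intro a b
    induction a using Quot.ind with | _ p =>
    induction b using Quot.ind with | _ q =>
    apply gmk_congr
    show p.1 * q.1 * (q.2 * p.2) = q.1 * p.1 * (p.2 * q.2)
    ac_rfl
  zero_add := by
    intro a
    induction a using Quot.ind with | _ p =>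
    apply gmk_congr
    show 1 * p.1 * p.2 = p.1 * (1 * p.2)
    ac_rfl
  add_zero := by
    intro a
    induction a using Quot.ind with | _ p =>
    apply gmk_congr
    show p.1 * 1 * p.2 = p.1 * (p.2 * 1)
    ac_rfl
  neg_add_cancel := by
    intro a
    induction a using Quot.ind with | _ p =>
    apply gmk_congr
    show p.2 * p.1 * 1 = 1 * (p.1 * p.2)
    ac_rfl
  nsmul := nsmulRec
  zsmul := zsmulRec

section Order
variable (hc : ∀ a b c : A, a * c = b * c → a = b)

include hc in
lemma gle_well_half {p p' q q' : A × A} (hp : frel p p') (hq : frel q q')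
    (h : (p.1 * q.2) ∣ (q.1 * p.2)) : (p'.1 * q'.2) ∣ (q'.1 * p'.2) := by
  obtain ⟨c, hcd⟩ := h
  refine ⟨c, ?_⟩
  apply hc _ _ (q.2 * p.1)
  calc q'.1 * p'.2 * (q.2 * p.1) = (q'.1 * q.2) * (p.1 * p'.2) := by ac_rfl
    _ = (q.1 * q'.2) * (p.1 * p'.2) := by rw [hq]
    _ = (q.1 * q'.2) * (p'.1 * p.2) := by rw [hp]
    _ = (q.1 * p.2) * (q'.2 * p'.1) := by ac_rfl
    _ = (p.1 * q.2 * c) * (q'.2 * p'.1) := by rw [hcd]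
    _ = p'.1 * q'.2 * c * (q.2 * p.1) := by ac_rfl

def gle : GG A → GG A → Prop :=
  Quot.lift
    (fun p => Quot.lift (fun q => (p.1 * q.2) ∣ (q.1 * p.2))
      (fun q q' (h : frel q q') => propext
        ⟨gle_well_half hc rfl h, gle_well_half hc rfl (h.symm : frel q' q)⟩))
    (fun p p' (h : frel p p') => by
      apply funext; intro x
      induction x using Quot.ind with
      | _ q => exact propext ⟨gle_well_half hc h rfl, gle_well_half hc (h.symm : frel p' p) rfl⟩)

lemma gle_mk (p q : A × A) : gle hc (gmk p) (gmk q) ↔ (p.1 * q.2) ∣ (q.1 * p.2) := Iff.rfl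


variable (htot : ∀ a b : A, Hoop.himp a b = 1 ∨ Hoop.himp b a = 1)

include hc htot in
lemma dvd_total (x y : A) : x ∣ y ∨ y ∣ x := by
  rcases htot y x with h | h
  · exact Or.inl ((himp_eq_one_iff_dvd hc y x).mp h)
  · exact Or.inr ((himp_eq_one_iff_dvd hc x y).mp h)

noncomputable def gorder : LinearOrder (GG A) :=
  { le := gle hc
    le_refl := by
      intro a
      induction a using Quot.ind with | _ p =>
      exact dvd_refl _
    le_trans := by
      intro a b c
      induction a using Quot.ind with | _ p =>
      induction b using Quot.ind with | _ q =>
      induction c using Quot.ind with | _ r =>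
      rintro ⟨u, hu⟩ ⟨w, hw⟩
      refine ⟨u * w, ?_⟩
      apply hc _ _ (q.1 * q.2)
      calc r.1 * p.2 * (q.1 * q.2) = (r.1 * q.2) * (q.1 * p.2) := by ac_rfl
        _ = (q.1 * r.2 * w) * (p.1 * q.2 * u) := by rw [hw, hu]
        _ = p.1 * r.2 * (u * w) * (q.1 * q.2) := by ac_rfl
    le_antisymm := by
      intro a b
      induction a using Quot.ind with | _ p =>
      induction b using Quot.ind with | _ q =>
      rintro ⟨u, hu⟩ ⟨w, hw⟩
      have e : p.1 * q.2 = p.1 * q.2 * (u * w) := by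
        calc p.1 * q.2 = q.1 * p.2 * w := hw
          _ = (p.1 * q.2 * u) * w := by rw [hu]
          _ = p.1 * q.2 * (u * w) := by ac_rfl
      have h1 : u * w = 1 := by
        apply hc (u * w) 1 (p.1 * q.2)
        rw [one_mul]
        calc (u * w) * (p.1 * q.2) = p.1 * q.2 * (u * w) := by ac_rfl
          _ = p.1 * q.2 := e.symm
      have hu1 : u = 1 := eq_one_of_mul_eq_one hc h1
      apply Quot.sound
      show p.1 * q.2 = q.1 * p.2
      rw [hu, hu1, mul_one]
    le_total := by
      intro a b
      induction a using Quot.ind with | _ p =>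
      induction b using Quot.ind with | _ q =>
      exact dvd_total hc htot _ _
    toDecidableLE := fun _ _ => Classical.dec _ }

include hc htot in
theorem gorder_mono : @IsOrderedAddMonoid (GG A) _ (gorder hc htot).toPartialOrder.toPreorder := by
  letI := gorder hc htot
  have key : ∀ a b : GG A, a ≤ b → ∀ c, c + a ≤ c + b := by
      intro a b hab c
      induction a using Quot.ind with | _ p =>
      induction b using Quot.ind with | _ q =>
      induction c using Quot.ind with | _ r =>
      obtain ⟨u, hu⟩ := hab
      refine ⟨u, ?_⟩
      show r.1 * q.1 * (r.2 * p.2) = r.1 * p.1 * (r.2 * q.2) * u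
      calc r.1 * q.1 * (r.2 * p.2) = (q.1 * p.2) * (r.1 * r.2) := by ac_rfl
        _ = (p.1 * q.2 * u) * (r.1 * r.2) := by rw [hu]
        _ = r.1 * p.1 * (r.2 * q.2) * u := by ac_rfl
  exact { add_le_add_left := fun a b h c => by rw [add_comm a c, add_comm b c]; exact key a b h c }

def iota (a : A) : GG A := gmk (a, 1)

lemma iota_mul (a b : A) : iota (a * b) = gadd (iota a) (iota b) := by
  apply gmk_congr
  show a * b * (1 * 1) = a * b * 1
  simp

lemma iota_one : iota (1 : A) = gmk (1, 1) := rfl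

include hc in
lemma iota_inj {a b : A} (h : iota a = iota b) : a = b := by
  have h2 : a * 1 = b * 1 := gg_exact hc h
  simpa using h2

lemma iota_le_iff (a b : A) : gle hc (iota a) (iota b) ↔ a ∣ b := by
  show gle hc (gmk (a, 1)) (gmk (b, 1)) ↔ a ∣ b
  rw [gle_mk]
  simp

lemma iota_nonneg (a : A) : gle hc (gmk (1, 1)) (iota a) := by
  show gle hc (gmk (1, 1)) (gmk (a, 1))
  rw [gle_mk]
  simp

end Order



def dotG {G : Type} [AddCommGroup G] {n : ℕ} (c : Fin n → ℤ) (g : Fin n → G) : G :=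
  ∑ i, c i • g i

variable {G : Type} [AddCommGroup G] {n : ℕ}

lemma dotG_add (c d : Fin n → ℤ) (g : Fin n → G) :
    dotG (c + d) g = dotG c g + dotG d g := by
  simp [dotG, add_smul, Finset.sum_add_distrib]

lemma dotG_smul (k : ℤ) (c : Fin n → ℤ) (g : Fin n → G) :
    dotG (k • c) g = k • dotG c g := by
  simp [dotG, Finset.smul_sum, mul_smul]

lemma dotG_neg (c : Fin n → ℤ) (g : Fin n → G) : dotG (-c) g = -dotG c g := by
  simp [dotG, Finset.sum_neg_distrib]

lemma dotG_sub (c d : Fin n → ℤ) (g : Fin n → G) :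
    dotG (c - d) g = dotG c g - dotG d g := by
  rw [sub_eq_add_neg, dotG_add, dotG_neg, sub_eq_add_neg]

lemma dotG_zero (g : Fin n → G) : dotG 0 g = 0 := by simp [dotG]

lemma dotG_single (i : Fin n) (g : Fin n → G) : dotG (Pi.single i 1) g = g i := by
  simp only [dotG]
  rw [Finset.sum_eq_single i]
  · simp
  · intro j _ hj; simp [Pi.single_apply, hj]
  · simp

lemma dotG_snoc (c : Fin (n+1) → ℤ) (g : Fin (n+1) → G) :
    dotG c g = dotG (Fin.init c) (Fin.init g) + c (Fin.last n) • g (Fin.last n) := by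
  simp [dotG, Fin.sum_univ_castSucc, Fin.init]

lemma exists_max (xs : List (ℚ × Bool)) (h : xs ≠ []) :
    ∃ m ∈ xs, ∀ y ∈ xs, y.1 ≤ m.1 := by
  induction xs with
  | nil => exact absurd rfl h
  | cons x xs ih =>
    rcases eq_or_ne xs [] with rfl | hne
    · exact ⟨x, List.mem_cons_self, by rintro y hy; rcases List.mem_singleton.mp hy with rfl; exact le_refl _⟩
    · obtain ⟨m, hm, hmax⟩ := ih hne
      rcases le_total m.1 x.1 with hle | hle
      · refine ⟨x, List.mem_cons_self, fun y hy => ?_⟩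
        rcases List.mem_cons.mp hy with rfl | hy
        · exact le_refl _
        · exact le_trans (hmax y hy) hle
      · refine ⟨m, List.mem_cons_of_mem _ hm, fun y hy => ?_⟩
        rcases List.mem_cons.mp hy with rfl | hy
        · exact hle
        · exact hmax y hy

lemma exists_min (xs : List (ℚ × Bool)) (h : xs ≠ []) :
    ∃ m ∈ xs, ∀ y ∈ xs, m.1 ≤ y.1 := by
  obtain ⟨m, hm, hmax⟩ := exists_max (xs.map (fun p => (-p.1, p.2))) (by simpa using h)
  obtain ⟨p, hp, rfl⟩ := List.mem_map.mp hm
  refine ⟨p, hp, fun y hy => ?_⟩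
  have := hmax (-y.1, y.2) (List.mem_map.mpr ⟨y, hy, rfl⟩)
  simpa using this

theorem pick (lo up : List (ℚ × Bool))
    (h : ∀ l ∈ lo, ∀ u ∈ up, if l.2 || u.2 then l.1 < u.1 else l.1 ≤ u.1) :
    ∃ x : ℚ, (∀ l ∈ lo, if l.2 then l.1 < x else l.1 ≤ x) ∧
             (∀ u ∈ up, if u.2 then x < u.1 else x ≤ u.1) := by
  rcases eq_or_ne lo [] with rfl | hlo
  · rcases eq_or_ne up [] with rfl | hup
    · exact ⟨0, by simp, by simp⟩
    · obtain ⟨m, hm, hmin⟩ := exists_min up hup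
      refine ⟨m.1 - 1, by simp, fun u hu => ?_⟩
      have := hmin u hu
      split <;> linarith
  · rcases eq_or_ne up [] with rfl | hup
    · obtain ⟨M, hM, hmax⟩ := exists_max lo hlo
      refine ⟨M.1 + 1, fun l hl => ?_, by simp⟩
      have := hmax l hl
      split <;> linarith
    · obtain ⟨M, hM, hmax⟩ := exists_max lo hlo
      obtain ⟨m, hm, hmin⟩ := exists_min up hup
      have hMm : M.1 ≤ m.1 := by
        have := h M hM m hm
        split at this <;> linarith
      rcases lt_or_eq_of_le hMm with hlt | heq
      · refine ⟨(M.1 + m.1) / 2, fun l hl => ?_, fun u hu => ?_⟩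
        · have := hmax l hl; split <;> linarith
        · have := hmin u hu; split <;> linarith
      · refine ⟨M.1, fun l hl => ?_, fun u hu => ?_⟩
        · have h1 := hmax l hl
          split
          · have h2 := h l hl m hm
            rw [show (l.2 || m.2) = true by simp_all] at h2
            simp at h2; linarith
          · exact h1
        · have h1 := hmin u hu
          split
          · have h2 := h M hM u hu
            rw [show (M.2 || u.2) = true by simp_all] at h2
            simp at h2; linarith
          · linarith


section Parts
variable {A : Type} [Hoop A]
variable (hc : ∀ a b c : A, a * c = b * c → a = b)

include hc in
theorem part1 (a : A) : ∃! f : ℕ → A, f 0 = 1 ∧ f 1 = a ∧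
    (∀ l m : ℕ, f (l + m) = f l * f m) ∧
    (∀ l m : ℕ, Hoop.himp (f l) (f m) = f (m - l)) := by
  refine ⟨fun n => a ^ n, ⟨pow_zero a, pow_one a, fun l m => pow_add a l m,
    fun l m => himp_pow hc a l m⟩, ?_⟩
  rintro g ⟨h0, h1, hadd, -⟩
  funext n
  induction n with
  | zero => simpa using h0
  | succ k ih => rw [hadd k 1, ih, h1, pow_succ]

include hc in
theorem heval_pow (a : A) (v : ℕ → ℕ) (t : HTerm) :
    heval (fun i => a ^ v i) t = a ^ ceval v t := by
  induction t with
  | var n => rfl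
  | one => simp [heval, ceval]
  | mul s t ihs iht => rw [heval, ceval, ihs, iht, pow_add]
  | imp s t ihs iht => rw [heval, ceval, ihs, iht, himp_pow hc]

include hc in
theorem part2_easy (hnt : ∃ a : A, a ≠ 1) (prem : List (HTerm × HTerm)) (s t : HTerm)
    (hA : ∀ v : ℕ → A, (∀ pq ∈ prem, heval v pq.1 = heval v pq.2) → heval v s = heval v t) :
    ∀ v : ℕ → ℕ, (∀ pq ∈ prem, ceval v pq.1 = ceval v pq.2) → ceval v s = ceval v t := by
  obtain ⟨a, ha⟩ := hnt
  intro v hp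
  have h := hA (fun i => a ^ v i) ?_
  · rw [heval_pow hc, heval_pow hc] at h
    exact pow_right_injective hc ha h
  · intro pq hpq
    rw [heval_pow hc, heval_pow hc, hp pq hpq]

end Parts

theorem FM {G : Type} [AddCommGroup G] [LinearOrder G] [IsOrderedAddMonoid G] :
    ∀ (n : ℕ) (L : List ((Fin n → ℤ) × Bool)) (g : Fin n → G),
    (∀ p ∈ L, if p.2 then 0 < dotG p.1 g else 0 ≤ dotG p.1 g) →
    ∃ z : Fin n → ℚ, ∀ p ∈ L, if p.2 then 0 < dotG p.1 z else 0 ≤ dotG p.1 z := by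
  intro n
  induction n with
  | zero =>
    intro L g hg
    refine ⟨fun i => 0, fun p hp => ?_⟩
    have h := hg p hp
    have h0 : ∀ (H : Type) [AddCommGroup H] (gg : Fin 0 → H), dotG p.1 gg = 0 := by
      intro H _ gg; simp [dotG]
    rw [h0] at h ⊢
    cases hb : p.2 <;> rw [hb] at h <;> simp_all
  | succ n ih =>
    intro L g hg
    set lst := Fin.last n with hlst
    set L0 : List ((Fin n → ℤ) × Bool) :=
      (L.filter (fun p => p.1 lst = 0)).map (fun p => (Fin.init p.1, p.2)) with hL0
    set combos : List ((Fin n → ℤ) × Bool) :=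
      (L.filter (fun p => 0 < p.1 lst)).flatMap (fun l =>
        (L.filter (fun p => p.1 lst < 0)).map (fun u =>
          ((-(u.1 lst)) • Fin.init l.1 + (l.1 lst) • Fin.init u.1, l.2 || u.2))) with hcombos
    -- satisfaction of the eliminated system in G
    have hsat : ∀ p ∈ L0 ++ combos,
        if p.2 then 0 < dotG p.1 (Fin.init g) else 0 ≤ dotG p.1 (Fin.init g) := by
      intro p hp
      rcases List.mem_append.mp hp with hp | hp
      · obtain ⟨q, hq, rfl⟩ := List.mem_map.mp hp
        obtain ⟨hqL, hq0⟩ := List.mem_filter.mp hq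
        have hq0' : q.1 lst = 0 := by simpa using hq0
        have := hg q hqL
        rw [dotG_snoc, hq0', zero_smul, add_zero] at this
        exact this
      · obtain ⟨l, hl, hp⟩ := List.mem_flatMap.mp hp
        obtain ⟨u, hu, rfl⟩ := List.mem_map.mp hp
        obtain ⟨hlL, hl0⟩ := List.mem_filter.mp hl
        obtain ⟨huL, hu0⟩ := List.mem_filter.mp hu
        have ha : 0 < l.1 lst := by simpa using hl0
        have hb : 0 < -(u.1 lst) := by simpa using (by simpa using hu0 : u.1 lst < 0)
        have hgl := hg l hlL
        have hgu := hg u huL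
        rw [dotG_snoc] at hgl hgu
        have key : dotG ((-(u.1 lst)) • Fin.init l.1 + (l.1 lst) • Fin.init u.1) (Fin.init g)
            = (-(u.1 lst)) • (dotG (Fin.init l.1) (Fin.init g) + l.1 lst • g lst)
              + (l.1 lst) • (dotG (Fin.init u.1) (Fin.init g) + u.1 lst • g lst) := by
          rw [dotG_add, dotG_smul, dotG_smul]
          module
        rw [← hcombos] at *
        rw [key]
        rcases hl2 : l.2 <;> rcases hu2 : u.2 <;>
          simp only [hl2, hu2, Bool.or_self, Bool.false_or, Bool.or_false,
            Bool.or_true, Bool.true_or] at hgl hgu ⊢ <;>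
          [skip; skip; skip; skip]
        · have h1 : 0 ≤ (-(u.1 lst)) • (dotG (Fin.init l.1) (Fin.init g) + l.1 lst • g lst) :=
            zsmul_nonneg hgl (le_of_lt hb)
          have h2 : 0 ≤ (l.1 lst) • (dotG (Fin.init u.1) (Fin.init g) + u.1 lst • g lst) :=
            zsmul_nonneg hgu (le_of_lt ha)
          simpa using add_nonneg h1 h2
        · have h1 : 0 ≤ (-(u.1 lst)) • (dotG (Fin.init l.1) (Fin.init g) + l.1 lst • g lst) :=
            zsmul_nonneg hgl (le_of_lt hb)
          have h2 : 0 < (l.1 lst) • (dotG (Fin.init u.1) (Fin.init g) + u.1 lst • g lst) :=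
            zsmul_pos hgu ha
          simpa using add_pos_of_nonneg_of_pos h1 h2
        · have h1 : 0 < (-(u.1 lst)) • (dotG (Fin.init l.1) (Fin.init g) + l.1 lst • g lst) :=
            zsmul_pos hgl hb
          have h2 : 0 ≤ (l.1 lst) • (dotG (Fin.init u.1) (Fin.init g) + u.1 lst • g lst) :=
            zsmul_nonneg hgu (le_of_lt ha)
          simpa using add_pos_of_pos_of_nonneg h1 h2
        · have h1 : 0 < (-(u.1 lst)) • (dotG (Fin.init l.1) (Fin.init g) + l.1 lst • g lst) :=
            zsmul_pos hgl hb
          have h2 : 0 < (l.1 lst) • (dotG (Fin.init u.1) (Fin.init g) + u.1 lst • g lst) :=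
            zsmul_pos hgu ha
          simpa using add_pos h1 h2
    obtain ⟨z', hz'⟩ := ih (L0 ++ combos) (Fin.init g) hsat
    classical
    set β : ((Fin (n+1) → ℤ) × Bool) → ℚ :=
      fun p => -(dotG (Fin.init p.1) z') / ((p.1 lst : ℤ) : ℚ) with hβ
    set lo := (L.filter (fun p => 0 < p.1 lst)).map (fun l => (β l, l.2)) with hlo
    set up := (L.filter (fun p => p.1 lst < 0)).map (fun u => (β u, u.2)) with hup
    have hpair : ∀ lb ∈ lo, ∀ ub ∈ up, if lb.2 || ub.2 then lb.1 < ub.1 else lb.1 ≤ ub.1 := by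
      intro lb hlb ub hub
      obtain ⟨l, hl, rfl⟩ := List.mem_map.mp hlb
      obtain ⟨u, hu, rfl⟩ := List.mem_map.mp hub
      have ha : 0 < l.1 lst := by simpa using (List.mem_filter.mp hl).2
      have hu0 : u.1 lst < 0 := by simpa using (List.mem_filter.mp hu).2
      have hcombo := hz' ((-(u.1 lst)) • Fin.init l.1 + (l.1 lst) • Fin.init u.1, l.2 || u.2)
        (List.mem_append.mpr (Or.inr (List.mem_flatMap.mpr
          ⟨l, hl, List.mem_map.mpr ⟨u, hu, rfl⟩⟩)))
      have hval : dotG ((-(u.1 lst)) • Fin.init l.1 + (l.1 lst) • Fin.init u.1) z'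
          = ((-(u.1 lst) : ℤ) : ℚ) * dotG (Fin.init l.1) z'
            + ((l.1 lst : ℤ) : ℚ) * dotG (Fin.init u.1) z' := by
        rw [dotG_add, dotG_smul, dotG_smul, zsmul_eq_mul, zsmul_eq_mul]
      rw [hval] at hcombo
      set X := dotG (Fin.init l.1) z' with hX
      set Y := dotG (Fin.init u.1) z' with hY
      have ha' : (0:ℚ) < ((l.1 lst : ℤ) : ℚ) := by exact_mod_cast ha
      have hb' : (0:ℚ) < ((-(u.1 lst) : ℤ) : ℚ) := by exact_mod_cast (by omega : (0:ℤ) < -(u.1 lst))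
      have hβu : β u = Y / ((-(u.1 lst) : ℤ) : ℚ) := by
        show -Y / ((u.1 lst : ℤ) : ℚ) = _
        rw [show ((u.1 lst : ℤ) : ℚ) = -((-(u.1 lst) : ℤ) : ℚ) by push_cast; ring]
        rw [div_neg, neg_div, neg_neg]
      have hβl : β l = -X / ((l.1 lst : ℤ) : ℚ) := rfl
      show if (l.2 || u.2) then β l < β u else β l ≤ β u
      rcases hor : (l.2 || u.2) with _ | _
      · rw [if_neg (by simp)]
        rw [hor] at hcombo; rw [if_neg (by simp)] at hcombo
        rw [hβl, hβu, div_le_div_iff₀ ha' hb']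
        nlinarith [hcombo]
      · rw [if_pos rfl]
        rw [hor] at hcombo; rw [if_pos rfl] at hcombo
        rw [hβl, hβu, div_lt_div_iff₀ ha' hb']
        nlinarith [hcombo]
    obtain ⟨x, hxlo, hxup⟩ := pick lo up hpair
    refine ⟨Fin.snoc z' x, ?_⟩
    intro p hp
    have hd : dotG p.1 (Fin.snoc z' x) = dotG (Fin.init p.1) z' + ((p.1 lst : ℤ):ℚ) * x := by
      rw [dotG_snoc]
      simp [Fin.init_snoc, Fin.snoc_last, zsmul_eq_mul, hlst]
    set D := dotG (Fin.init p.1) z' with hD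
    rcases lt_trichotomy (p.1 lst) 0 with hneg | hzero | hpos
    · have hmem : (β p, p.2) ∈ up := List.mem_map.mpr ⟨p, List.mem_filter.mpr ⟨hp, by simpa using hneg⟩, rfl⟩
      have hx := hxup _ hmem
      dsimp only at hx
      have hc' : ((p.1 lst : ℤ) : ℚ) < 0 := by exact_mod_cast hneg
      rcases Bool.eq_false_or_eq_true p.2 with hb2 | hb2 <;> rw [hb2] at hx ⊢
      · rw [if_pos rfl] at hx ⊢
        have : x < -D / ((p.1 lst : ℤ) : ℚ) := hx
        rw [lt_div_iff_of_neg hc'] at this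
        rw [hd]; nlinarith [this]
      · rw [if_neg Bool.false_ne_true] at hx ⊢
        have : x ≤ -D / ((p.1 lst : ℤ) : ℚ) := hx
        rw [le_div_iff_of_neg hc'] at this
        rw [hd]; nlinarith [this]
    · have hp0 : (Fin.init p.1, p.2) ∈ L0 ++ combos :=
        List.mem_append.mpr (Or.inl (List.mem_map.mpr
          ⟨p, List.mem_filter.mpr ⟨hp, by simpa using hzero⟩, rfl⟩))
      have hzv := hz' _ hp0
      rw [hd, hzero]
      simpa using hzv
    · have hmem : (β p, p.2) ∈ lo := List.mem_map.mpr ⟨p, List.mem_filter.mpr ⟨hp, by simpa using hpos⟩, rfl⟩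
      have hx := hxlo _ hmem
      dsimp only at hx
      have hc' : (0:ℚ) < ((p.1 lst : ℤ) : ℚ) := by exact_mod_cast hpos
      rcases Bool.eq_false_or_eq_true p.2 with hb2 | hb2 <;> rw [hb2] at hx ⊢
      · rw [if_pos rfl] at hx ⊢
        have : -D / ((p.1 lst : ℤ) : ℚ) < x := hx
        rw [div_lt_iff₀ hc'] at this
        rw [hd]; nlinarith [this]
      · rw [if_neg Bool.false_ne_true] at hx ⊢
        have : -D / ((p.1 lst : ℤ) : ℚ) ≤ x := hx
        rw [div_le_iff₀ hc'] at this
        rw [hd]; nlinarith [this]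




theorem FMZ {G : Type} [AddCommGroup G] [LinearOrder G] [IsOrderedAddMonoid G]
    (n : ℕ) (L : List ((Fin n → ℤ) × Bool)) (g : Fin n → G)
    (hg : ∀ p ∈ L, if p.2 then 0 < dotG p.1 g else 0 ≤ dotG p.1 g) :
    ∃ z : Fin n → ℤ, ∀ p ∈ L, if p.2 then 0 < dotG p.1 z else 0 ≤ dotG p.1 z := by
  obtain ⟨z, hz⟩ := FM n L g hg
  set D : ℕ := ∏ i, (z i).den with hD
  have hDpos : 0 < D := Finset.prod_pos (fun i _ => (z i).pos)
  set zz : Fin n → ℤ := fun i => (z i).num * ((D : ℤ) / ((z i).den : ℤ)) with hzz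
  have hcast : ∀ i, ((zz i : ℤ) : ℚ) = z i * (D : ℚ) := by
    intro i
    have hdvd : ((z i).den : ℤ) ∣ (D : ℤ) :=
      Int.natCast_dvd_natCast.mpr (Finset.dvd_prod_of_mem _ (Finset.mem_univ i))
    obtain ⟨k, hk⟩ := hdvd
    have hden : ((z i).den : ℤ) ≠ 0 := by exact_mod_cast (z i).den_nz
    rw [hzz]
    simp only
    rw [hk, Int.mul_ediv_cancel_left _ hden]
    have hne : ((z i).den : ℚ) ≠ 0 := by exact_mod_cast (z i).den_nz
    have h1 : ((z i).num : ℚ) = z i * ((z i).den : ℚ) := by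
      have h0 := Rat.num_div_den (z i)
      rw [div_eq_iff hne] at h0
      exact h0
    have h2 : ((D : ℚ)) = ((z i).den : ℚ) * (k : ℚ) := by exact_mod_cast hk
    push_cast
    rw [h1, h2]
    ring
  have hdot : ∀ c : Fin n → ℤ, ((dotG c zz : ℤ) : ℚ) = (D : ℚ) * dotG c z := by
    intro c
    rw [dotG, dotG]
    push_cast
    rw [Finset.mul_sum]
    apply Finset.sum_congr rfl
    intro i _
    rw [zsmul_eq_mul, zsmul_eq_mul]
    push_cast [hcast i]
    ring
  refine ⟨zz, fun p hp => ?_⟩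
  have h := hz p hp
  have hD' : (0:ℚ) < (D : ℚ) := by exact_mod_cast hDpos
  split at h <;> split
  · have : (0:ℚ) < ((dotG p.1 zz : ℤ) : ℚ) := by rw [hdot]; positivity
    exact_mod_cast this
  · simp_all
  · simp_all
  · have : (0:ℚ) ≤ ((dotG p.1 zz : ℤ) : ℚ) := by rw [hdot]; positivity
    exact_mod_cast this

def vb : HTerm → ℕ
  | .var i => i + 1
  | .one => 0
  | .mul a b => max (vb a) (vb b)
  | .imp a b => max (vb a) (vb b)

lemma le_foldr_max (l : List ℕ) (x : ℕ) (hx : x ∈ l) : x ≤ l.foldr max 0 := by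
  induction l with
  | nil => simp at hx
  | cons a l ih =>
    rcases List.mem_cons.mp hx with rfl | hx
    · exact le_max_left _ _
    · exact le_trans (ih hx) (le_max_right _ _)

section Assembly
variable {A : Type} [Hoop A]

open Classical in
noncomputable def texp (hc : ∀ a b c : A, a * c = b * c → a = b) (n : ℕ) (g : Fin n → GG A) :
    HTerm → (Fin n → ℤ)
  | .var i => if h : i < n then Pi.single ⟨i, h⟩ 1 else 0
  | .one => 0
  | .mul a b => texp hc n g a + texp hc n g b
  | .imp a b =>
      if gle hc (gmk (1, 1)) (dotG (texp hc n g b - texp hc n g a) g)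
      then texp hc n g b - texp hc n g a else 0

open Classical in
noncomputable def impCons (hc : ∀ a b c : A, a * c = b * c → a = b) (n : ℕ) (g : Fin n → GG A) :
    HTerm → List ((Fin n → ℤ) × Bool)
  | .var _ => []
  | .one => []
  | .mul a b => impCons hc n g a ++ impCons hc n g b
  | .imp a b =>
      (if gle hc (gmk (1, 1)) (dotG (texp hc n g b - texp hc n g a) g)
       then (texp hc n g b - texp hc n g a, false)
       else (-(texp hc n g b - texp hc n g a), false)) :: (impCons hc n g a ++ impCons hc n g b)

theorem part2_hard (hc : ∀ a b c : A, a * c = b * c → a = b)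
    (htot : ∀ a b : A, Hoop.himp a b = 1 ∨ Hoop.himp b a = 1)
    (prem : List (HTerm × HTerm)) (s t : HTerm)
    (hN : ∀ v : ℕ → ℕ, (∀ pq ∈ prem, ceval v pq.1 = ceval v pq.2) → ceval v s = ceval v t)
    (v : ℕ → A) (hprem : ∀ pq ∈ prem, heval v pq.1 = heval v pq.2) :
    heval v s = heval v t := by
  classical
  letI : LinearOrder (GG A) := gorder hc htot
  haveI : IsOrderedAddMonoid (GG A) := gorder_mono hc htot
  set allT : List HTerm := s :: t :: (prem.map Prod.fst ++ prem.map Prod.snd) with hallT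
  set n : ℕ := (allT.map vb).foldr max 0 with hn
  have hvb : ∀ u ∈ allT, vb u ≤ n := fun u hu =>
    le_foldr_max _ _ (List.mem_map.mpr ⟨u, hu, rfl⟩)
  set g : Fin n → GG A := fun i => iota (v i.1) with hg
  -- the evaluation of every subterm is the monomial given by `texp`
  have L2 : ∀ u : HTerm, vb u ≤ n → iota (heval v u) = dotG (texp hc n g u) g := by
    intro u
    induction u with
    | var i =>
      intro hi
      have h : i < n := by simpa [vb] using hi
      show iota (v i) = dotG (texp hc n g (.var i)) g
      rw [texp, dif_pos h, dotG_single]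
    | one =>
      intro _
      show iota 1 = dotG (texp hc n g .one) g
      rw [texp, dotG_zero, iota_one]
      rfl
    | mul a b iha ihb =>
      intro hab
      have ha : vb a ≤ n := le_trans (le_max_left _ _) hab
      have hb : vb b ≤ n := le_trans (le_max_right _ _) hab
      show iota (heval v a * heval v b) = dotG (texp hc n g (.mul a b)) g
      rw [texp, dotG_add, ← iha ha, ← ihb hb, iota_mul]
      rfl
    | imp a b iha ihb =>
      intro hab
      have ha : vb a ≤ n := le_trans (le_max_left _ _) hab
      have hb : vb b ≤ n := le_trans (le_max_right _ _) hab
      by_cases hcond : gle hc (gmk (1, 1)) (dotG (texp hc n g b - texp hc n g a) g)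
      · have hle : iota (heval v a) ≤ iota (heval v b) := by
          have h0 : (0 : GG A) ≤ dotG (texp hc n g b - texp hc n g a) g := hcond
          rw [dotG_sub, ← iha ha, ← ihb hb] at h0
          exact sub_nonneg.mp h0
        have hdvd : heval v a ∣ heval v b := (iota_le_iff hc _ _).mp hle
        have h1 : Hoop.himp (heval v b) (heval v a) = 1 :=
          (himp_eq_one_iff_dvd hc _ _).mpr hdvd
        have h2 : heval v a * Hoop.himp (heval v a) (heval v b) = heval v b := by
          have h3 := Hoop.div_eq (heval v a) (heval v b)
          rw [h1, mul_one] at h3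
          exact h3
        have h4 : iota (heval v a) + iota (Hoop.himp (heval v a) (heval v b))
            = iota (heval v b) := by
          rw [show ∀ x y : GG A, x + y = gadd x y from fun _ _ => rfl, ← iota_mul, h2]
        show iota (Hoop.himp (heval v a) (heval v b)) = dotG (texp hc n g (.imp a b)) g
        rw [texp, if_pos hcond, dotG_sub, ← iha ha, ← ihb hb]
        exact eq_sub_of_add_eq' h4
      · have hdvd : heval v b ∣ heval v a := by
          rcases dvd_total hc htot (heval v a) (heval v b) with h | h
          · exact absurd (show (0:GG A) ≤ dotG (texp hc n g b - texp hc n g a) g by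
              rw [dotG_sub, ← iha ha, ← ihb hb]
              exact sub_nonneg.mpr ((iota_le_iff hc _ _).mpr h)) hcond
          · exact h
        have h1 : Hoop.himp (heval v a) (heval v b) = 1 :=
          (himp_eq_one_iff_dvd hc _ _).mpr hdvd
        show iota (Hoop.himp (heval v a) (heval v b)) = dotG (texp hc n g (.imp a b)) g
        rw [texp, if_neg hcond, dotG_zero, h1, iota_one]
        rfl
  -- all recorded constraints are weak and hold in `GG A`
  have L1 : ∀ u : HTerm, ∀ p ∈ impCons hc n g u, p.2 = false ∧ (0 : GG A) ≤ dotG p.1 g := by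
    intro u
    induction u with
    | var i => intro p hp; simp [impCons] at hp
    | one => intro p hp; simp [impCons] at hp
    | mul a b iha ihb =>
      intro p hp
      rw [impCons] at hp
      rcases List.mem_append.mp hp with hp | hp
      · exact iha p hp
      · exact ihb p hp
    | imp a b iha ihb =>
      intro p hp
      rw [impCons] at hp
      rcases List.mem_cons.mp hp with rfl | hp
      · by_cases hcond : gle hc (gmk (1, 1)) (dotG (texp hc n g b - texp hc n g a) g)
        · rw [if_pos hcond]
          exact ⟨rfl, hcond⟩
        · rw [if_neg hcond]
          refine ⟨rfl, ?_⟩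
          show (0 : GG A) ≤ dotG (-(texp hc n g b - texp hc n g a)) g
          rw [dotG_neg]
          exact neg_nonneg.mpr (le_of_not_ge hcond)
      · rcases List.mem_append.mp hp with hp | hp
        · exact iha p hp
        · exact ihb p hp
  -- correspondence between `ceval` at an integer point and `texp`
  have L3 : ∀ (z : Fin n → ℤ), (∀ i, 0 ≤ z i) →
      ∀ u : HTerm, vb u ≤ n → (∀ p ∈ impCons hc n g u, (0:ℤ) ≤ dotG p.1 z) →
      ((ceval (fun i => if h : i < n then (z ⟨i, h⟩).toNat else 0) u : ℤ)
        = dotG (texp hc n g u) z) := by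
    intro z hz u
    induction u with
    | var i =>
      intro hi _
      have h : i < n := by simpa [vb] using hi
      show (((if h : i < n then (z ⟨i, h⟩).toNat else 0) : ℕ) : ℤ) = _
      rw [dif_pos h, texp, dif_pos h, dotG_single]
      exact Int.toNat_of_nonneg (hz _)
    | one =>
      intro _ _
      show ((0 : ℕ) : ℤ) = dotG (texp hc n g .one) z
      rw [texp, dotG_zero]
      rfl
    | mul a b iha ihb =>
      intro hab hcons
      have ha : vb a ≤ n := le_trans (le_max_left _ _) hab
      have hb : vb b ≤ n := le_trans (le_max_right _ _) hab
      have hca : ∀ p ∈ impCons hc n g a, (0:ℤ) ≤ dotG p.1 z := fun p hp =>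
        hcons p (by rw [impCons]; exact List.mem_append.mpr (Or.inl hp))
      have hcb : ∀ p ∈ impCons hc n g b, (0:ℤ) ≤ dotG p.1 z := fun p hp =>
        hcons p (by rw [impCons]; exact List.mem_append.mpr (Or.inr hp))
      show ((ceval _ a + ceval _ b : ℕ) : ℤ) = dotG (texp hc n g (.mul a b)) z
      rw [texp, dotG_add, ← iha ha hca, ← ihb hb hcb]
      push_cast
      ring
    | imp a b iha ihb =>
      intro hab hcons
      have ha : vb a ≤ n := le_trans (le_max_left _ _) hab
      have hb : vb b ≤ n := le_trans (le_max_right _ _) hab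
      have hca : ∀ p ∈ impCons hc n g a, (0:ℤ) ≤ dotG p.1 z := fun p hp =>
        hcons p (by rw [impCons]; exact List.mem_cons_of_mem _ (List.mem_append.mpr (Or.inl hp)))
      have hcb : ∀ p ∈ impCons hc n g b, (0:ℤ) ≤ dotG p.1 z := fun p hp =>
        hcons p (by rw [impCons]; exact List.mem_cons_of_mem _ (List.mem_append.mpr (Or.inr hp)))
      have hA := iha ha hca
      have hB := ihb hb hcb
      have hhead := hcons _ (List.mem_cons_self)
      by_cases hcond : gle hc (gmk (1, 1)) (dotG (texp hc n g b - texp hc n g a) g)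
      · rw [if_pos hcond] at hhead
        have hhead' : (0:ℤ) ≤ dotG (texp hc n g b - texp hc n g a) z := hhead
        rw [dotG_sub] at hhead'
        have hle : ceval (fun i => if h : i < n then (z ⟨i, h⟩).toNat else 0) a
            ≤ ceval (fun i => if h : i < n then (z ⟨i, h⟩).toNat else 0) b := by
          have : (ceval (fun i => if h : i < n then (z ⟨i, h⟩).toNat else 0) a : ℤ)
              ≤ (ceval (fun i => if h : i < n then (z ⟨i, h⟩).toNat else 0) b : ℤ) := by
            rw [hA, hB]; linarith
          exact_mod_cast this
        show ((ceval _ b - ceval _ a : ℕ) : ℤ) = dotG (texp hc n g (.imp a b)) z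
        rw [texp, if_pos hcond, dotG_sub, ← hA, ← hB, Nat.cast_sub hle]
      · rw [if_neg hcond] at hhead
        have hhead' : (0:ℤ) ≤ dotG (-(texp hc n g b - texp hc n g a)) z := hhead
        rw [dotG_neg, dotG_sub] at hhead'
        have hle : ceval (fun i => if h : i < n then (z ⟨i, h⟩).toNat else 0) b
            ≤ ceval (fun i => if h : i < n then (z ⟨i, h⟩).toNat else 0) a := by
          have : (ceval (fun i => if h : i < n then (z ⟨i, h⟩).toNat else 0) b : ℤ)
              ≤ (ceval (fun i => if h : i < n then (z ⟨i, h⟩).toNat else 0) a : ℤ) := by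
            rw [hA, hB]; linarith
          exact_mod_cast this
        show ((ceval _ b - ceval _ a : ℕ) : ℤ) = dotG (texp hc n g (.imp a b)) z
        rw [texp, if_neg hcond, dotG_zero, Nat.sub_eq_zero_of_le hle]
        rfl
  -- membership helpers
  have hsmem : s ∈ allT := List.mem_cons_self
  have htmem : t ∈ allT := List.mem_cons_of_mem _ (List.mem_cons_self)
  have hpmem : ∀ pq ∈ prem, pq.1 ∈ allT ∧ pq.2 ∈ allT := by
    intro pq hpq
    constructor
    · exact List.mem_cons_of_mem _ (List.mem_cons_of_mem _
        (List.mem_append.mpr (Or.inl (List.mem_map.mpr ⟨pq, hpq, rfl⟩))))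
    · exact List.mem_cons_of_mem _ (List.mem_cons_of_mem _
        (List.mem_append.mpr (Or.inr (List.mem_map.mpr ⟨pq, hpq, rfl⟩))))
  have hpremG : ∀ pq ∈ prem, dotG (texp hc n g pq.1) g = dotG (texp hc n g pq.2) g := by
    intro pq hpq
    rw [← L2 _ (hvb _ (hpmem pq hpq).1), ← L2 _ (hvb _ (hpmem pq hpq).2), hprem pq hpq]
  set base : List ((Fin n → ℤ) × Bool) :=
    ((List.finRange n).map (fun i => (Pi.single i 1, false)))
    ++ allT.flatMap (fun u => impCons hc n g u)
    ++ prem.flatMap (fun pq => [(texp hc n g pq.1 - texp hc n g pq.2, false),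
                                (texp hc n g pq.2 - texp hc n g pq.1, false)]) with hbase
  have noStrict : ∀ s' t' : HTerm, s' ∈ allT → t' ∈ allT →
      (∀ w : ℕ → ℕ, (∀ pq ∈ prem, ceval w pq.1 = ceval w pq.2) → ceval w s' = ceval w t') →
      ¬ (0 < dotG (texp hc n g s' - texp hc n g t') g) := by
    intro s' t' hs' ht' hval hstrict
    have hsat : ∀ p ∈ base ++ [(texp hc n g s' - texp hc n g t', true)],
        if p.2 then 0 < dotG p.1 g else 0 ≤ dotG p.1 g := by
      intro p hp
      rcases List.mem_append.mp hp with hp | hp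
      · rcases List.mem_append.mp hp with hp | hp
        · rcases List.mem_append.mp hp with hp | hp
          · obtain ⟨i, _, rfl⟩ := List.mem_map.mp hp
            rw [if_neg Bool.false_ne_true]
            show (0 : GG A) ≤ dotG (Pi.single i 1) g
            rw [dotG_single]
            exact iota_nonneg hc _
          · obtain ⟨u, _, hp⟩ := List.mem_flatMap.mp hp
            obtain ⟨h2f, h2le⟩ := L1 u p hp
            rw [h2f, if_neg Bool.false_ne_true]
            exact h2le
        · obtain ⟨pq, hpq, hp⟩ := List.mem_flatMap.mp hp
          have heq := hpremG pq hpq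
          rcases List.mem_cons.mp hp with rfl | hp
          · rw [if_neg Bool.false_ne_true]
            show (0 : GG A) ≤ dotG (texp hc n g pq.1 - texp hc n g pq.2) g
            rw [dotG_sub, heq, sub_self]
          · rcases List.mem_singleton.mp hp with rfl
            rw [if_neg Bool.false_ne_true]
            show (0 : GG A) ≤ dotG (texp hc n g pq.2 - texp hc n g pq.1) g
            rw [dotG_sub, heq, sub_self]
      · rcases List.mem_singleton.mp hp with rfl
        rw [if_pos rfl]
        exact hstrict
    obtain ⟨z, hzsat⟩ := FMZ n (base ++ [(texp hc n g s' - texp hc n g t', true)]) g hsat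
    have hz0 : ∀ i, 0 ≤ z i := by
      intro i
      have h := hzsat (Pi.single i 1, false)
        (List.mem_append.mpr (Or.inl (List.mem_append.mpr (Or.inl (List.mem_append.mpr
          (Or.inl (List.mem_map.mpr ⟨i, List.mem_finRange i, rfl⟩)))))))
      rw [if_neg Bool.false_ne_true] at h
      rw [dotG_single] at h
      exact h
    have hcons : ∀ u ∈ allT, ∀ p ∈ impCons hc n g u, (0:ℤ) ≤ dotG p.1 z := by
      intro u hu p hp
      have h := hzsat p (List.mem_append.mpr (Or.inl (List.mem_append.mpr (Or.inl
        (List.mem_append.mpr (Or.inr (List.mem_flatMap.mpr ⟨u, hu, hp⟩)))))))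
      rw [(L1 u p hp).1, if_neg Bool.false_ne_true] at h
      exact h
    have hterm : ∀ u ∈ allT,
        ((ceval (fun i => if h : i < n then (z ⟨i, h⟩).toNat else 0) u : ℤ)
          = dotG (texp hc n g u) z) :=
      fun u hu => L3 z hz0 u (hvb u hu) (hcons u hu)
    have hpremw : ∀ pq ∈ prem,
        ceval (fun i => if h : i < n then (z ⟨i, h⟩).toNat else 0) pq.1
          = ceval (fun i => if h : i < n then (z ⟨i, h⟩).toNat else 0) pq.2 := by
      intro pq hpq
      have h1 := hzsat (texp hc n g pq.1 - texp hc n g pq.2, false)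
        (List.mem_append.mpr (Or.inl (List.mem_append.mpr (Or.inr (List.mem_flatMap.mpr
          ⟨pq, hpq, List.mem_cons_self⟩)))))
      have h2 := hzsat (texp hc n g pq.2 - texp hc n g pq.1, false)
        (List.mem_append.mpr (Or.inl (List.mem_append.mpr (Or.inr (List.mem_flatMap.mpr
          ⟨pq, hpq, List.mem_cons_of_mem _ (List.mem_singleton.mpr rfl)⟩)))))
      rw [if_neg Bool.false_ne_true] at h1 h2
      rw [dotG_sub] at h1 h2
      have h3 : dotG (texp hc n g pq.1) z = dotG (texp hc n g pq.2) z := by linarith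
      have h4 := hterm pq.1 (hpmem pq hpq).1
      have h5 := hterm pq.2 (hpmem pq hpq).2
      have : ((ceval (fun i => if h : i < n then (z ⟨i, h⟩).toNat else 0) pq.1 : ℤ)
          = (ceval (fun i => if h : i < n then (z ⟨i, h⟩).toNat else 0) pq.2 : ℤ)) := by
        rw [h4, h5, h3]
      exact_mod_cast this
    have hconc := hval _ hpremw
    have hstrictz := hzsat (texp hc n g s' - texp hc n g t', true)
      (List.mem_append.mpr (Or.inr (List.mem_singleton.mpr rfl)))
    rw [if_pos rfl] at hstrictz
    rw [dotG_sub, ← hterm s' hs', ← hterm t' ht', hconc] at hstrictz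
    simp at hstrictz
  rcases lt_trichotomy (dotG (texp hc n g s - texp hc n g t) g) 0 with hlt | heq | hgt
  · exfalso
    apply noStrict t s htmem hsmem (fun w h => (hN w h).symm)
    have h0 : 0 < -(dotG (texp hc n g s - texp hc n g t) g) := neg_pos.mpr hlt
    rw [← dotG_neg, neg_sub] at h0
    exact h0
  · have h1 : dotG (texp hc n g s) g = dotG (texp hc n g t) g := by
      rw [dotG_sub] at heq
      exact sub_eq_zero.mp heq
    have h2 : iota (heval v s) = iota (heval v t) := by
      rw [L2 s (hvb s hsmem), L2 t (hvb t htmem), h1]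
    exact iota_inj hc h2
  · exact absurd hgt (noStrict s t hsmem htmem hN)

end Assembly

end HoopAux

/-- `C_ω` is the free one-generated cancellative hoop — for every
cancellative hoop `A` and every `a : A` there is a unique homomorphism of `C_ω`
into `A` sending the generator to `a` — and consequently every nontrivial totally
ordered cancellative hoop satisfies exactly the same quasiequations as `C_ω`,
i.e. generates the same quasivariety. -/
theorem Comega_free_cancellative :
    (∀ (A : Type) [Hoop A], (∀ a b c : A, a * c = b * c → a = b) →
      ∀ a : A, ∃! f : ℕ → A, f 0 = 1 ∧ f 1 = a ∧
        (∀ l m : ℕ, f (l + m) = f l * f m) ∧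
        (∀ l m : ℕ, Hoop.himp (f l) (f m) = f (m - l))) ∧
    (∀ (A : Type) [Hoop A], (∀ a b c : A, a * c = b * c → a = b) →
      (∀ a b : A, Hoop.himp a b = 1 ∨ Hoop.himp b a = 1) →
      (∃ a : A, a ≠ 1) →
      ∀ (prem : List (HTerm × HTerm)) (s t : HTerm),
        ((∀ v : ℕ → ℕ, (∀ pq ∈ prem, ceval v pq.1 = ceval v pq.2) →
            ceval v s = ceval v t) ↔
         (∀ v : ℕ → A, (∀ pq ∈ prem, heval v pq.1 = heval v pq.2) →
            heval v s = heval v t))) := by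
  constructor
  · intro A _ hc a
    exact HoopAux.part1 hc a
  · intro A _ hc htot hnt prem s t
    constructor
    · intro hN v hprem
      exact HoopAux.part2_hard hc htot prem s t hN v hprem
    · intro hA
      exact HoopAux.part2_easy hc hnt prem s t hA
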